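/- Let 0<q₁<1 and 0<q₂<1, let β,δ>0, μ,ν>0 and η,ζ>−1 be real parameters, let f,g,h : [0,∞)→ℝ be continuous pairwise synchronous functions on [0,∞) with h nonnegative, and let u : [0,∞)→[0,∞) be continuous. Then for all t>0: I_{q₂}^{ζ,ν,δ}{u·f·g·h}(t)·I_{q₁}^{η,μ,β}{u}(t) + I_{q₂}^{ζ,ν,δ}{u·f·g}(t)·I_{q₁}^{η,μ,β}{u·h}(t) + I_{q₂}^{ζ,ν,δ}{u·h}(t)·I_{q₁}^{η,μ,β}{u·f·g}(t) + I_{q₂}^{ζ,ν,δ}{u}(t)·I_{q₁}^{η,μ,β}{u·f·g·h}(t) ≥ I_{q₂}^{ζ,ν,δ}{u·g·h}(t)·I_{q₁}^{η,μ,β}{u·f}(t) + I_{q₂}^{ζ,ν,δ}{u·f·h}(t)·I_{q₁}^{η,μ,β}{u·g}(t) + I_{q₂}^{ζ,ν,δ}{u·f}(t)·I_{q₁}^{η,μ,β}{u·g·h}(t) + I_{q₂}^{ζ,ν,δ}{u·g}(t)·I_{q₁}^{η,μ,β}{u·f·h}(t). -/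

import Mathlib

open scoped BigOperators

/-- The q-shifted factorial (a;q)_k = prod_{j<k} (1 - a q^j). -/
noncomputable def qPoch (q a : ℝ) (k : ℕ) : ℝ :=
  ∏ j ∈ Finset.range k, (1 - a * q ^ j)

/-- Generalized Erdélyi–Kober fractional q-integral
    I_q^{η,μ,β}{f}(t) = β(1-q^{1/β})(1-q)^{μ-1} ∑_k ((q^μ;q)_k/(q;q)_k) q^{k(η+1)} f(t q^{k/β}). -/
noncomputable def EK (q η μ β : ℝ) (f : ℝ → ℝ) (t : ℝ) : ℝ :=
  β * (1 - q ^ (1 / β)) * (1 - q) ^ (μ - 1) *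
    ∑' k : ℕ, qPoch q (q ^ μ) k / qPoch q q k * q ^ ((k : ℝ) * (η + 1)) * f (t * q ^ ((k : ℝ) / β))

def Synchronous (f g : ℝ → ℝ) : Prop :=
  ∀ x y : ℝ, 0 ≤ x → 0 ≤ y → 0 ≤ (f x - f y) * (g x - g y)

def Asynchronous (f g : ℝ → ℝ) : Prop :=
  ∀ x y : ℝ, 0 ≤ x → 0 ≤ y → (f x - f y) * (g x - g y) ≤ 0

lemma qPoch_pos {q a : ℝ} (hq0 : 0 < q) (hq1 : q < 1) (ha0 : 0 ≤ a) (ha1 : a < 1) (k : ℕ) :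
    0 < qPoch q a k := by
  refine Finset.prod_pos fun j _ => ?_
  have h1 : a * q ^ j ≤ a * 1 := by
    apply mul_le_mul_of_nonneg_left _ ha0
    exact pow_le_one₀ hq0.le hq1.le
  linarith

/-- The weight sequence of the EK q-integral. -/
noncomputable def wEK (q μ η : ℝ) (k : ℕ) : ℝ :=
  qPoch q (q ^ μ) k / qPoch q q k * q ^ ((k : ℝ) * (η + 1))

lemma wEK_pos {q μ η : ℝ} (hq0 : 0 < q) (hq1 : q < 1) (hμ : 0 < μ) (k : ℕ) :
    0 < wEK q μ η k := by
  have h1 : 0 < qPoch q (q ^ μ) k :=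
    qPoch_pos hq0 hq1 (Real.rpow_nonneg hq0.le μ) (Real.rpow_lt_one hq0.le hq1 hμ) k
  have h2 : 0 < qPoch q q k := qPoch_pos hq0 hq1 hq0.le hq1 k
  have h3 : (0:ℝ) < q ^ ((k : ℝ) * (η + 1)) := Real.rpow_pos_of_pos hq0 _
  rw [wEK]; exact mul_pos (div_pos h1 h2) h3

lemma wEK_summable {q μ η : ℝ} (hq0 : 0 < q) (hq1 : q < 1) (hμ : 0 < μ) (hη : -1 < η) :
    Summable (wEK q μ η) := by
  have hqη : q ^ (η + 1) < 1 := Real.rpow_lt_one hq0.le hq1 (by linarith)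
  apply summable_of_ratio_test_tendsto_lt_one hqη
  · exact Filter.Eventually.of_forall fun k => (wEK_pos hq0 hq1 hμ k).ne'
  · have hpow : Filter.Tendsto (fun k : ℕ => q ^ k) Filter.atTop (nhds 0) :=
      tendsto_pow_atTop_nhds_zero_of_lt_one hq0.le hq1
    have htend : Filter.Tendsto
        (fun k : ℕ => (1 - q ^ μ * q ^ k) / (1 - q * q ^ k) * q ^ (η + 1))
        Filter.atTop (nhds ((1 - q ^ μ * 0) / (1 - q * 0) * q ^ (η + 1))) := by
      exact (((tendsto_const_nhds.sub (hpow.const_mul _)).div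
        (tendsto_const_nhds.sub (hpow.const_mul _)) (by norm_num)).mul_const _)
    simp only [mul_zero, sub_zero, div_one, one_mul] at htend
    refine htend.congr fun k => ?_
    have hpos := wEK_pos (η := η) hq0 hq1 hμ k
    have hposs := wEK_pos (η := η) hq0 hq1 hμ (k + 1)
    rw [Real.norm_of_nonneg hposs.le, Real.norm_of_nonneg hpos.le]
    have e1 : qPoch q (q ^ μ) (k + 1) = qPoch q (q ^ μ) k * (1 - q ^ μ * q ^ k) :=
      Finset.prod_range_succ _ k
    have e2 : qPoch q q (k + 1) = qPoch q q k * (1 - q * q ^ k) :=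
      Finset.prod_range_succ _ k
    have e3 : q ^ (((k : ℕ) + 1 : ℝ) * (η + 1)) = q ^ ((k : ℝ) * (η + 1)) * q ^ (η + 1) := by
      rw [← Real.rpow_add hq0]; ring_nf
    have h2 : 0 < qPoch q q k := qPoch_pos hq0 hq1 hq0.le hq1 k
    have h1 : 0 < qPoch q (q ^ μ) k :=
      qPoch_pos hq0 hq1 (Real.rpow_nonneg hq0.le μ) (Real.rpow_lt_one hq0.le hq1 hμ) k
    have h4 : (0:ℝ) < 1 - q * q ^ k := by
      nlinarith [pow_le_one₀ hq0.le hq1.le (n := k), pow_pos hq0 k]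
    have h3 : (0:ℝ) < q ^ ((k : ℝ) * (η + 1)) := Real.rpow_pos_of_pos hq0 _
    rw [wEK, wEK, e1, e2]
    push_cast
    rw [e3]
    field_simp

lemma EKpt_mem {q β t : ℝ} (hq0 : 0 < q) (hq1 : q < 1) (hβ : 0 < β) (ht : 0 < t) (k : ℕ) :
    t * q ^ ((k : ℝ) / β) ∈ Set.Icc (0:ℝ) t := by
  constructor
  · positivity
  · nlinarith [Real.rpow_le_one hq0.le hq1.le (div_nonneg (Nat.cast_nonneg k) hβ.le)]

lemma summable_wEK_mul {q μ η β t : ℝ} (hq0 : 0 < q) (hq1 : q < 1) (hμ : 0 < μ)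
    (hη : -1 < η) (hβ : 0 < β) (ht : 0 < t) {φ : ℝ → ℝ}
    (hφ : ContinuousOn φ (Set.Icc 0 t)) :
    Summable fun k : ℕ => wEK q μ η k * φ (t * q ^ ((k : ℝ) / β)) := by
  obtain ⟨M, hM⟩ := isCompact_Icc.exists_bound_of_continuousOn hφ
  refine Summable.of_norm_bounded ((wEK_summable hq0 hq1 hμ hη).mul_right M) fun k => ?_
  have hw := wEK_pos (η := η) hq0 hq1 hμ k
  rw [norm_mul, Real.norm_of_nonneg hw.le]
  exact mul_le_mul_of_nonneg_left (hM _ (EKpt_mem hq0 hq1 hβ ht k)) hw.le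

/-- One-variable Chebyshev-type step: compare against a fixed point X. -/
lemma cheb_step (b yv : ℕ → ℝ) (hb : ∀ k, 0 ≤ b k) (hy : ∀ k, 0 ≤ yv k)
    (f g h u : ℝ → ℝ) (hfg : Synchronous f g)
    (hh0 : ∀ s : ℝ, 0 ≤ s → 0 ≤ h s) (hu0 : ∀ s : ℝ, 0 ≤ s → 0 ≤ u s)
    (Sb_u : Summable fun k => b k * u (yv k))
    (Sb_uf : Summable fun k => b k * (u (yv k) * f (yv k)))
    (Sb_ug : Summable fun k => b k * (u (yv k) * g (yv k)))
    (Sb_uh : Summable fun k => b k * (u (yv k) * h (yv k)))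
    (Sb_ufg : Summable fun k => b k * (u (yv k) * f (yv k) * g (yv k)))
    (Sb_ufh : Summable fun k => b k * (u (yv k) * f (yv k) * h (yv k)))
    (Sb_ugh : Summable fun k => b k * (u (yv k) * g (yv k) * h (yv k)))
    (Sb_ufgh : Summable fun k => b k * (u (yv k) * f (yv k) * g (yv k) * h (yv k)))
    (X : ℝ) (hX : 0 ≤ X) :
    (u X * g X * h X) * (∑' k, b k * (u (yv k) * f (yv k))) +
      (u X * f X * h X) * (∑' k, b k * (u (yv k) * g (yv k))) +
      (u X * f X) * (∑' k, b k * (u (yv k) * g (yv k) * h (yv k))) +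
      (u X * g X) * (∑' k, b k * (u (yv k) * f (yv k) * h (yv k)))
      ≤
    (u X * f X * g X * h X) * (∑' k, b k * u (yv k)) +
      (u X * f X * g X) * (∑' k, b k * (u (yv k) * h (yv k))) +
      (u X * h X) * (∑' k, b k * (u (yv k) * f (yv k) * g (yv k))) +
      (u X) * (∑' k, b k * (u (yv k) * f (yv k) * g (yv k) * h (yv k))) := by
  have r1 := Sb_uf.mul_left (u X * g X * h X)
  have r2 := Sb_ug.mul_left (u X * f X * h X)
  have r3 := Sb_ugh.mul_left (u X * f X)
  have r4 := Sb_ufh.mul_left (u X * g X)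
  have l1 := Sb_u.mul_left (u X * f X * g X * h X)
  have l2 := Sb_uh.mul_left (u X * f X * g X)
  have l3 := Sb_ufg.mul_left (u X * h X)
  have l4 := Sb_ufgh.mul_left (u X)
  calc (u X * g X * h X) * (∑' k, b k * (u (yv k) * f (yv k))) +
      (u X * f X * h X) * (∑' k, b k * (u (yv k) * g (yv k))) +
      (u X * f X) * (∑' k, b k * (u (yv k) * g (yv k) * h (yv k))) +
      (u X * g X) * (∑' k, b k * (u (yv k) * f (yv k) * h (yv k)))
      = ∑' k, ((u X * g X * h X) * (b k * (u (yv k) * f (yv k))) +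
          (u X * f X * h X) * (b k * (u (yv k) * g (yv k))) +
          (u X * f X) * (b k * (u (yv k) * g (yv k) * h (yv k))) +
          (u X * g X) * (b k * (u (yv k) * f (yv k) * h (yv k)))) := by
        rw [Summable.tsum_add ((r1.add r2).add r3) r4, Summable.tsum_add (r1.add r2) r3, Summable.tsum_add r1 r2,
          tsum_mul_left, tsum_mul_left, tsum_mul_left, tsum_mul_left]
    _ ≤ ∑' k, ((u X * f X * g X * h X) * (b k * u (yv k)) +
          (u X * f X * g X) * (b k * (u (yv k) * h (yv k))) +
          (u X * h X) * (b k * (u (yv k) * f (yv k) * g (yv k))) +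
          (u X) * (b k * (u (yv k) * f (yv k) * g (yv k) * h (yv k)))) := by
        refine Summable.tsum_le_tsum (fun k => ?_) (((r1.add r2).add r3).add r4)
          (((l1.add l2).add l3).add l4)
        have key : (u X * f X * g X * h X) * (b k * u (yv k)) +
            (u X * f X * g X) * (b k * (u (yv k) * h (yv k))) +
            (u X * h X) * (b k * (u (yv k) * f (yv k) * g (yv k))) +
            (u X) * (b k * (u (yv k) * f (yv k) * g (yv k) * h (yv k))) -
            ((u X * g X * h X) * (b k * (u (yv k) * f (yv k))) +
            (u X * f X * h X) * (b k * (u (yv k) * g (yv k))) +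
            (u X * f X) * (b k * (u (yv k) * g (yv k) * h (yv k))) +
            (u X * g X) * (b k * (u (yv k) * f (yv k) * h (yv k)))) =
            b k * (u X * u (yv k)) *
              (((f X - f (yv k)) * (g X - g (yv k))) * (h X + h (yv k))) := by ring
        have hnn : 0 ≤ b k * (u X * u (yv k)) *
            (((f X - f (yv k)) * (g X - g (yv k))) * (h X + h (yv k))) := by
          refine mul_nonneg (mul_nonneg (hb k) (mul_nonneg (hu0 X hX) (hu0 _ (hy k)))) ?_
          refine mul_nonneg (hfg X (yv k) hX (hy k)) ?_
          have := hh0 X hX; have := hh0 (yv k) (hy k); linarith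
        linarith
    _ = _ := by
        rw [Summable.tsum_add ((l1.add l2).add l3) l4, Summable.tsum_add (l1.add l2) l3, Summable.tsum_add l1 l2,
          tsum_mul_left, tsum_mul_left, tsum_mul_left, tsum_mul_left]

lemma cheb_core (a b xv yv : ℕ → ℝ) (ha : ∀ j, 0 ≤ a j) (hb : ∀ k, 0 ≤ b k)
    (hx : ∀ j, 0 ≤ xv j) (hy : ∀ k, 0 ≤ yv k)
    (f g h u : ℝ → ℝ) (hfg : Synchronous f g)
    (hh0 : ∀ s : ℝ, 0 ≤ s → 0 ≤ h s) (hu0 : ∀ s : ℝ, 0 ≤ s → 0 ≤ u s)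
    (Sa_u : Summable fun j => a j * u (xv j))
    (Sa_uf : Summable fun j => a j * (u (xv j) * f (xv j)))
    (Sa_ug : Summable fun j => a j * (u (xv j) * g (xv j)))
    (Sa_uh : Summable fun j => a j * (u (xv j) * h (xv j)))
    (Sa_ufg : Summable fun j => a j * (u (xv j) * f (xv j) * g (xv j)))
    (Sa_ufh : Summable fun j => a j * (u (xv j) * f (xv j) * h (xv j)))
    (Sa_ugh : Summable fun j => a j * (u (xv j) * g (xv j) * h (xv j)))
    (Sa_ufgh : Summable fun j => a j * (u (xv j) * f (xv j) * g (xv j) * h (xv j)))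
    (Sb_u : Summable fun k => b k * u (yv k))
    (Sb_uf : Summable fun k => b k * (u (yv k) * f (yv k)))
    (Sb_ug : Summable fun k => b k * (u (yv k) * g (yv k)))
    (Sb_uh : Summable fun k => b k * (u (yv k) * h (yv k)))
    (Sb_ufg : Summable fun k => b k * (u (yv k) * f (yv k) * g (yv k)))
    (Sb_ufh : Summable fun k => b k * (u (yv k) * f (yv k) * h (yv k)))
    (Sb_ugh : Summable fun k => b k * (u (yv k) * g (yv k) * h (yv k)))
    (Sb_ufgh : Summable fun k => b k * (u (yv k) * f (yv k) * g (yv k) * h (yv k))) :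
    (∑' j, a j * (u (xv j) * g (xv j) * h (xv j))) * (∑' k, b k * (u (yv k) * f (yv k))) +
      (∑' j, a j * (u (xv j) * f (xv j) * h (xv j))) * (∑' k, b k * (u (yv k) * g (yv k))) +
      (∑' j, a j * (u (xv j) * f (xv j))) * (∑' k, b k * (u (yv k) * g (yv k) * h (yv k))) +
      (∑' j, a j * (u (xv j) * g (xv j))) * (∑' k, b k * (u (yv k) * f (yv k) * h (yv k)))
      ≤
    (∑' j, a j * (u (xv j) * f (xv j) * g (xv j) * h (xv j))) * (∑' k, b k * u (yv k)) +
      (∑' j, a j * (u (xv j) * f (xv j) * g (xv j))) * (∑' k, b k * (u (yv k) * h (yv k))) +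
      (∑' j, a j * (u (xv j) * h (xv j))) * (∑' k, b k * (u (yv k) * f (yv k) * g (yv k))) +
      (∑' j, a j * u (xv j)) * (∑' k, b k * (u (yv k) * f (yv k) * g (yv k) * h (yv k))) := by
  have r1 := Sa_ugh.mul_right (∑' k, b k * (u (yv k) * f (yv k)))
  have r2 := Sa_ufh.mul_right (∑' k, b k * (u (yv k) * g (yv k)))
  have r3 := Sa_uf.mul_right (∑' k, b k * (u (yv k) * g (yv k) * h (yv k)))
  have r4 := Sa_ug.mul_right (∑' k, b k * (u (yv k) * f (yv k) * h (yv k)))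
  have l1 := Sa_ufgh.mul_right (∑' k, b k * u (yv k))
  have l2 := Sa_ufg.mul_right (∑' k, b k * (u (yv k) * h (yv k)))
  have l3 := Sa_uh.mul_right (∑' k, b k * (u (yv k) * f (yv k) * g (yv k)))
  have l4 := Sa_u.mul_right (∑' k, b k * (u (yv k) * f (yv k) * g (yv k) * h (yv k)))
  calc (∑' j, a j * (u (xv j) * g (xv j) * h (xv j))) * (∑' k, b k * (u (yv k) * f (yv k))) +
      (∑' j, a j * (u (xv j) * f (xv j) * h (xv j))) * (∑' k, b k * (u (yv k) * g (yv k))) +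
      (∑' j, a j * (u (xv j) * f (xv j))) * (∑' k, b k * (u (yv k) * g (yv k) * h (yv k))) +
      (∑' j, a j * (u (xv j) * g (xv j))) * (∑' k, b k * (u (yv k) * f (yv k) * h (yv k)))
      = ∑' j, ((a j * (u (xv j) * g (xv j) * h (xv j))) * (∑' k, b k * (u (yv k) * f (yv k))) +
          (a j * (u (xv j) * f (xv j) * h (xv j))) * (∑' k, b k * (u (yv k) * g (yv k))) +
          (a j * (u (xv j) * f (xv j))) * (∑' k, b k * (u (yv k) * g (yv k) * h (yv k))) +
          (a j * (u (xv j) * g (xv j))) * (∑' k, b k * (u (yv k) * f (yv k) * h (yv k)))) := by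
        rw [Summable.tsum_add ((r1.add r2).add r3) r4, Summable.tsum_add (r1.add r2) r3, Summable.tsum_add r1 r2,
          tsum_mul_right, tsum_mul_right, tsum_mul_right, tsum_mul_right]
    _ ≤ ∑' j, ((a j * (u (xv j) * f (xv j) * g (xv j) * h (xv j))) * (∑' k, b k * u (yv k)) +
          (a j * (u (xv j) * f (xv j) * g (xv j))) * (∑' k, b k * (u (yv k) * h (yv k))) +
          (a j * (u (xv j) * h (xv j))) * (∑' k, b k * (u (yv k) * f (yv k) * g (yv k))) +
          (a j * u (xv j)) * (∑' k, b k * (u (yv k) * f (yv k) * g (yv k) * h (yv k)))) := by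
        refine Summable.tsum_le_tsum (fun j => ?_) (((r1.add r2).add r3).add r4)
          (((l1.add l2).add l3).add l4)
        have step := cheb_step b yv hb hy f g h u hfg hh0 hu0 Sb_u Sb_uf Sb_ug Sb_uh
          Sb_ufg Sb_ufh Sb_ugh Sb_ufgh (xv j) (hx j)
        nlinarith [mul_le_mul_of_nonneg_left step (ha j)]
    _ = _ := by
        rw [Summable.tsum_add ((l1.add l2).add l3) l4, Summable.tsum_add (l1.add l2) l3, Summable.tsum_add l1 l2,
          tsum_mul_right, tsum_mul_right, tsum_mul_right, tsum_mul_right]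

set_option maxHeartbeats 2000000 in
theorem thm0
    (q₁ q₂ β δ μ ν η ζ : ℝ)
    (hq₁ : 0 < q₁) (hq₁' : q₁ < 1) (hq₂ : 0 < q₂) (hq₂' : q₂ < 1)
    (hβ : 0 < β) (hδ : 0 < δ) (hμ : 0 < μ) (hν : 0 < ν)
    (hη : -1 < η) (hζ : -1 < ζ)
    (f g h u : ℝ → ℝ)
    (hcf : ContinuousOn f (Set.Ici 0))
    (hcg : ContinuousOn g (Set.Ici 0))
    (hch : ContinuousOn h (Set.Ici 0))
    (hcu : ContinuousOn u (Set.Ici 0))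
    (hfg : Synchronous f g) (hfh : Synchronous f h) (hgh : Synchronous g h)
    (hh0 : ∀ x : ℝ, 0 ≤ x → 0 ≤ h x)
    (hu0 : ∀ x : ℝ, 0 ≤ x → 0 ≤ u x)
    (t : ℝ) (ht : 0 < t) :
    EK q₂ ζ ν δ (fun s => u s * f s * g s * h s) t * EK q₁ η μ β u t +
      EK q₂ ζ ν δ (fun s => u s * f s * g s) t * EK q₁ η μ β (fun s => u s * h s) t +
      EK q₂ ζ ν δ (fun s => u s * h s) t * EK q₁ η μ β (fun s => u s * f s * g s) t +
      EK q₂ ζ ν δ u t * EK q₁ η μ β (fun s => u s * f s * g s * h s) t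
      ≥
      EK q₂ ζ ν δ (fun s => u s * g s * h s) t * EK q₁ η μ β (fun s => u s * f s) t +
      EK q₂ ζ ν δ (fun s => u s * f s * h s) t * EK q₁ η μ β (fun s => u s * g s) t +
      EK q₂ ζ ν δ (fun s => u s * f s) t * EK q₁ η μ β (fun s => u s * g s * h s) t +
      EK q₂ ζ ν δ (fun s => u s * g s) t * EK q₁ η μ β (fun s => u s * f s * h s) t := by
  -- weights and sample points
  set a : ℕ → ℝ := wEK q₂ ν ζ with ha_def
  set b : ℕ → ℝ := wEK q₁ μ η with hb_def
  set xv : ℕ → ℝ := fun j => t * q₂ ^ ((j : ℝ) / δ) with hx_def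
  set yv : ℕ → ℝ := fun k => t * q₁ ^ ((k : ℝ) / β) with hy_def
  have hEK₂ : ∀ φ : ℝ → ℝ, EK q₂ ζ ν δ φ t =
      (δ * (1 - q₂ ^ (1 / δ)) * (1 - q₂) ^ (ν - 1)) * ∑' j, a j * φ (xv j) := fun φ => rfl
  have hEK₁ : ∀ φ : ℝ → ℝ, EK q₁ η μ β φ t =
      (β * (1 - q₁ ^ (1 / β)) * (1 - q₁) ^ (μ - 1)) * ∑' k, b k * φ (yv k) := fun φ => rfl
  have hC₂ : 0 ≤ δ * (1 - q₂ ^ (1 / δ)) * (1 - q₂) ^ (ν - 1) := by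
    have h1 : q₂ ^ (1 / δ) ≤ 1 := Real.rpow_le_one hq₂.le hq₂'.le (by positivity)
    have h2 : (0:ℝ) < (1 - q₂) ^ (ν - 1) := Real.rpow_pos_of_pos (by linarith) _
    have : (0:ℝ) ≤ δ * (1 - q₂ ^ (1 / δ)) := mul_nonneg hδ.le (by linarith)
    exact mul_nonneg this h2.le
  have hC₁ : 0 ≤ β * (1 - q₁ ^ (1 / β)) * (1 - q₁) ^ (μ - 1) := by
    have h1 : q₁ ^ (1 / β) ≤ 1 := Real.rpow_le_one hq₁.le hq₁'.le (by positivity)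
    have h2 : (0:ℝ) < (1 - q₁) ^ (μ - 1) := Real.rpow_pos_of_pos (by linarith) _
    have : (0:ℝ) ≤ β * (1 - q₁ ^ (1 / β)) := mul_nonneg hβ.le (by linarith)
    exact mul_nonneg this h2.le
  have ha : ∀ j, 0 ≤ a j := fun j => (wEK_pos hq₂ hq₂' hν j).le
  have hb : ∀ k, 0 ≤ b k := fun k => (wEK_pos hq₁ hq₁' hμ k).le
  have hx : ∀ j, 0 ≤ xv j := fun j => (EKpt_mem hq₂ hq₂' hδ ht j).1
  have hy : ∀ k, 0 ≤ yv k := fun k => (EKpt_mem hq₁ hq₁' hβ ht k).1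
  -- continuity on [0,t]
  have hsub : Set.Icc (0:ℝ) t ⊆ Set.Ici 0 := Set.Icc_subset_Ici_self
  have cf := hcf.mono hsub
  have cg := hcg.mono hsub
  have ch := hch.mono hsub
  have cu := hcu.mono hsub
  have Sa : ∀ {φ : ℝ → ℝ}, ContinuousOn φ (Set.Icc 0 t) →
      Summable fun j => a j * φ (xv j) := fun hφ =>
    summable_wEK_mul hq₂ hq₂' hν hζ hδ ht hφ
  have Sb : ∀ {φ : ℝ → ℝ}, ContinuousOn φ (Set.Icc 0 t) →
      Summable fun k => b k * φ (yv k) := fun hφ =>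
    summable_wEK_mul hq₁ hq₁' hμ hη hβ ht hφ
  have key := cheb_core a b xv yv ha hb hx hy f g h u hfg hh0 hu0
    (Sa (φ := u) cu)
    (Sa (φ := fun s => u s * f s) (cu.mul cf))
    (Sa (φ := fun s => u s * g s) (cu.mul cg))
    (Sa (φ := fun s => u s * h s) (cu.mul ch))
    (Sa (φ := fun s => u s * f s * g s) ((cu.mul cf).mul cg))
    (Sa (φ := fun s => u s * f s * h s) ((cu.mul cf).mul ch))
    (Sa (φ := fun s => u s * g s * h s) ((cu.mul cg).mul ch))
    (Sa (φ := fun s => u s * f s * g s * h s) (((cu.mul cf).mul cg).mul ch))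
    (Sb (φ := u) cu)
    (Sb (φ := fun s => u s * f s) (cu.mul cf))
    (Sb (φ := fun s => u s * g s) (cu.mul cg))
    (Sb (φ := fun s => u s * h s) (cu.mul ch))
    (Sb (φ := fun s => u s * f s * g s) ((cu.mul cf).mul cg))
    (Sb (φ := fun s => u s * f s * h s) ((cu.mul cf).mul ch))
    (Sb (φ := fun s => u s * g s * h s) ((cu.mul cg).mul ch))
    (Sb (φ := fun s => u s * f s * g s * h s) (((cu.mul cf).mul cg).mul ch))
  rw [ge_iff_le, hEK₂, hEK₂, hEK₂, hEK₂, hEK₂, hEK₂, hEK₂, hEK₂,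
    hEK₁, hEK₁, hEK₁, hEK₁, hEK₁, hEK₁, hEK₁, hEK₁]
  linarith [mul_le_mul_of_nonneg_left key (mul_nonneg hC₂ hC₁)]
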